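/- The operators U₁ (initial model) and U₂ (perturbed model 1) differ by an operator of rank at most 4: U₂ - U₁ = -|δ_{z,ℓ}⟩⟨δ_{z-1,ℓ}| - |δ_{z+1,ℓ}⟩⟨δ_{z,ℓ}| + |δ_{z+1,ℓ}⟩⟨δ_{z-1,ℓ}| + |δ_{z,ℓ}⟩⟨δ_{z,ℓ}|, and U₂ is unitary with U₂ δ_{z,ℓ} = δ_{z,ℓ}. -/

import Mathlib

noncomputable section

abbrev H : Type := lp (fun _ : ℤ × ℕ => ℂ) 2

noncomputable def δ (x : ℤ) (j : ℕ) : H := lp.single 2 (x, j) 1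

open scoped InnerProductSpace

lemma inner_δ_δ (x y : ℤ) (j k : ℕ) :
    (inner ℂ (δ x j) (δ y k) : ℂ) = if (y, k) = (x, j) then 1 else 0 := by
  rw [δ, δ, lp.inner_single_left, lp.single_apply]
  split_ifs <;> simp_all

lemma inner_δ (x : ℤ) (j : ℕ) (f : H) : (inner ℂ (δ x j) f : ℂ) = f (x, j) := by
  rw [δ, lp.inner_single_left]
  simp

theorem perturbed_model_1_exists (ℓ : ℕ) (hℓ : 1 ≤ ℓ) (z : ℤ) (hz : -(ℓ : ℤ) + 2 ≤ z)
    (U₁ : H ≃ₗᵢ[ℂ] H)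
    (hU₁a : ∀ (x : ℤ) (j : ℕ), x ≠ -(j : ℤ) - 1 → x ≠ -(j : ℤ) →
      U₁ (δ x j) = δ (x + 1) j)
    (hU₁b : ∀ j : ℕ, U₁ (δ (-(j : ℤ) - 1) j) = δ (-(j : ℤ)) (j + 1))
    (hU₁c : ∀ j : ℕ, 1 ≤ j → U₁ (δ (-(j : ℤ)) j) = δ (-(j : ℤ) + 1) (j - 1))
    (hU₁d : U₁ (δ 0 0) = δ 1 0) :
    ∃ U₂ : H ≃ₗᵢ[ℂ] H,
      (∀ f : H, U₂ f = U₁ f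
        - (inner ℂ (δ (z - 1) ℓ) f : ℂ) • δ z ℓ
        - (inner ℂ (δ z ℓ) f : ℂ) • δ (z + 1) ℓ
        + (inner ℂ (δ (z - 1) ℓ) f : ℂ) • δ (z + 1) ℓ
        + (inner ℂ (δ z ℓ) f : ℂ) • δ z ℓ) ∧
      LinearMap.rank (U₂.toLinearEquiv.toLinearMap - U₁.toLinearEquiv.toLinearMap) ≤ 4 ∧
      U₂ (δ z ℓ) = δ z ℓ := by
  classical
  set a : H := δ (z - 1) ℓ with ha
  set b : H := δ z ℓ with hb
  set u : H := a - b with hu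
  -- basic inner product facts
  have hab : a ≠ b := by
    intro h
    have := congrArg (fun f : H => (inner ℂ a f : ℂ)) h
    simp only [ha, hb, inner_δ_δ] at this
    have hzz : (z, ℓ) ≠ (z - 1, ℓ) := by
      simp only [ne_eq, Prod.mk.injEq, not_and]
      intro h'; omega
    simp [hzz] at this
  have haa : (inner ℂ a a : ℂ) = 1 := by rw [ha, inner_δ_δ]; simp
  have hbb : (inner ℂ b b : ℂ) = 1 := by rw [hb, inner_δ_δ]; simp
  have habi : (inner ℂ a b : ℂ) = 0 := by
    rw [ha, hb, inner_δ_δ]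
    have hzz : (z, ℓ) ≠ (z - 1, ℓ) := by
      simp only [ne_eq, Prod.mk.injEq, not_and]
      intro h'; omega
    simp [hzz]
  have hbai : (inner ℂ b a : ℂ) = 0 := by
    rw [← inner_conj_symm, habi]; simp
  have huu : (inner ℂ u u : ℂ) = 2 := by
    simp only [hu, inner_sub_sub_self, haa, hbb, habi, hbai]
    ring
  -- the swap as a reflection
  set S : H ≃ₗᵢ[ℂ] H := Submodule.reflection ((ℂ ∙ u)ᗮ) with hS
  have hSapp : ∀ f : H, S f = f - (inner ℂ u f : ℂ) • u := by
    intro f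
    rw [hS, Submodule.reflection_orthogonal_apply, Submodule.reflection_singleton_apply,
      ← inner_self_eq_norm_sq_to_K (𝕜 := ℂ), huu, two_smul]
    have hc : ((inner ℂ u f : ℂ) / 2) • u + ((inner ℂ u f : ℂ) / 2) • u
        = (inner ℂ u f : ℂ) • u := by
      rw [← add_smul]
      congr 1
      ring
    rw [hc, neg_sub]
  refine ⟨S.trans U₁, ?_, ?_, ?_⟩
  · -- images of a and b under U₁
    have hUa : U₁ a = δ z ℓ := by
      rw [ha]
      have := hU₁a (z - 1) ℓ (by omega) (by omega)
      rw [this]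
      congr 1; ring
    have hUb : U₁ b = δ (z + 1) ℓ := by
      rw [hb]
      exact hU₁a z ℓ (by omega) (by omega)
    intro f
    have : (S.trans U₁) f = U₁ f - (inner ℂ u f : ℂ) • (δ z ℓ - δ (z + 1) ℓ) := by
      rw [LinearIsometryEquiv.trans_apply, hSapp, map_sub, LinearIsometryEquiv.map_smul,
        hu, map_sub, hUa, hUb]
    rw [this, hu, inner_sub_left]
    simp only [smul_sub, sub_smul, ha, hb]
    abel
  · -- rank bound
    set T := (S.trans U₁).toLinearEquiv.toLinearMap - U₁.toLinearEquiv.toLinearMap with hT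
    have hTapp : ∀ f : H, T f = -((inner ℂ u f : ℂ) • (U₁ u)) := by
      intro f
      simp only [hT, LinearMap.sub_apply, LinearEquiv.coe_coe,
        LinearIsometryEquiv.coe_toLinearEquiv, LinearIsometryEquiv.trans_apply, hSapp,
        map_sub, LinearIsometryEquiv.map_smul]
      abel
    have hrange : LinearMap.range T ≤ ℂ ∙ (U₁ u) := by
      rintro _ ⟨f, rfl⟩
      rw [hTapp]
      exact Submodule.mem_span_singleton.mpr ⟨-(inner ℂ u f : ℂ), by rw [neg_smul]⟩
    calc LinearMap.rank T ≤ Module.rank ℂ (ℂ ∙ (U₁ u)) := Submodule.rank_mono hrange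
      _ ≤ 1 := by simpa using rank_span_le (R := ℂ) ({U₁ u} : Set H)
      _ ≤ 4 := by norm_num
  · -- fixed point
    have hSb : S b = a := by
      rw [hSapp, hu, inner_sub_left, habi, hbb]
      simp
    have h1 : (S.trans U₁) b = U₁ a := by
      rw [LinearIsometryEquiv.trans_apply, hSb]
    rw [h1, ha, hU₁a (z - 1) ℓ (by omega) (by omega), hb]
    congr 1
    ring
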